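/- arXiv:2509.14184 — 4 statements merged into one kernel-verified Lean document; each statement's English description precedes it below -/
import Mathlib

section
/- The graph G* is a cubic (3-regular) loopless graph that admits a perfect matching. -/
/-- A loopless multigraph: each edge has an unordered pair of distinct endpoints.
Parallel edges are allowed. -/
structure Multigraph (V : Type) (E : Type) where
  ends : E → Sym2 V
  loopless : ∀ e, ¬ (ends e).IsDiag

namespace Multigraph

variable {V E V' E' V'' E'' : Type}

/-- `G.inc v` is the set `∂_G(v)` of edges of `G` incident with the vertex `v`. -/
def inc (G : Multigraph V E) (v : V) : Set E := {e | v ∈ G.ends e}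

/-- Two edges are adjacent if they are distinct and share an endpoint. -/
def EdgeAdj (G : Multigraph V E) (e₁ e₂ : E) : Prop :=
  e₁ ≠ e₂ ∧ ∃ v, e₁ ∈ G.inc v ∧ e₂ ∈ G.inc v

/-- `f` is an `H`-coloring of `G`: a proper edge-coloring (adjacent edges of `G` receive
distinct images) such that for every vertex `v` of `G` there is a vertex `u` of `H` with
`f(∂_G(v)) = ∂_H(u)`. -/
def IsColoring (G : Multigraph V E) (H : Multigraph V' E') (f : E → E') : Prop :=
  (∀ e₁ e₂, G.EdgeAdj e₁ e₂ → f e₁ ≠ f e₂) ∧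
  (∀ v : V, ∃ u : V', f '' G.inc v = H.inc u)

end Multigraph

/-- The graph `G*`.  Vertices `0,…,8` induce the Petersen graph minus a vertex `v₀`
(vertices `0`, `3`, `4` are the former neighbours of `v₀`); vertex `9` is `u`;
vertices `10`, `11` are `s₁`, `s₂`; vertices `12,13,14` form the triangle `t₁t₂t₃`;
vertices `15,…,23` are the three attached copies of `S₄` (with `17`, `20`, `23`
the vertices `c` joined to `s₁`, `s₂`, `t₃` respectively).
Edges `0,…,11` form `E₁` (the copy of the Petersen graph minus a vertex),
edges `12,…,23` form `E₂`, and edges `24,…,35` are the edges of the copies of `S₄`. -/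
def Gstar : Multigraph (Fin 24) (Fin 36) where
  ends := ![s(0,1), s(1,2), s(2,3), s(0,5), s(1,6), s(2,7), s(3,8), s(4,6), s(4,7),
            s(5,7), s(5,8), s(6,8),
            s(9,10), s(9,11), s(9,12), s(12,13), s(13,14), s(12,14),
            s(10,0), s(11,3), s(13,4), s(10,17), s(11,20), s(14,23),
            s(15,16), s(15,16), s(15,17), s(16,17),
            s(18,19), s(18,19), s(18,20), s(19,20),
            s(21,22), s(21,22), s(21,23), s(22,23)]
  loopless := by decide

/-- `E₁`: the edges of the subgraph `H` of `G*` isomorphic to the Petersen graph minus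
a vertex. -/
def E1 : Set (Fin 36) := {e | e.val ≤ 11}

/-- `E₂`: the edges of `G*` belonging neither to `E₁` nor to a copy of `S₄`. -/
def E2 : Set (Fin 36) := {e | 12 ≤ e.val ∧ e.val ≤ 23}

/-- The graph `G*` is a cubic (3-regular) loopless graph (looplessness is built into
the `Multigraph` structure) that admits a perfect matching: a set `M` of pairwise
nonadjacent edges such that every vertex is incident with an edge of `M`. -/
theorem gstar_cubic_and_has_perfect_matching :
    (∀ v : Fin 24, (Gstar.inc v).ncard = 3) ∧
    (∃ M : Set (Fin 36), (∀ e₁ ∈ M, ∀ e₂ ∈ M, ¬ Gstar.EdgeAdj e₁ e₂) ∧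
      ∀ v : Fin 24, ∃ e ∈ M, e ∈ Gstar.inc v) := by
  constructor
  · intro v
    have h : Gstar.inc v = ↑(Finset.univ.filter (fun e => v ∈ Gstar.ends e)) := by
      ext e; simp [Multigraph.inc]
    rw [h, Set.ncard_coe_finset]
    clear h; revert v; decide
  · refine ⟨↑({0,2,9,11,14,20,21,22,23,24,28,32} : Finset (Fin 36)), ?_, ?_⟩
    · intro e₁ h₁ e₂ h₂
      simp only [Finset.coe_insert, Set.mem_insert_iff, Finset.coe_singleton,
        Set.mem_singleton_iff] at h₁ h₂
      revert h₁ h₂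
      have : ∀ a b : Fin 36, a ∈ ({0,2,9,11,14,20,21,22,23,24,28,32} : Finset (Fin 36)) →
          b ∈ ({0,2,9,11,14,20,21,22,23,24,28,32} : Finset (Fin 36)) →
          ¬ Gstar.EdgeAdj a b := by
        intro a b ha hb
        simp only [Multigraph.EdgeAdj, Multigraph.inc, Set.mem_setOf_eq, not_and, not_exists]
        revert ha hb; revert a b; decide
      intro h₁ h₂
      apply this <;> simp_all
    · intro v
      have : ∀ v : Fin 24, ∃ e ∈ ({0,2,9,11,14,20,21,22,23,24,28,32} : Finset (Fin 36)),
          v ∈ Gstar.ends e := by decide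
      obtain ⟨e, he, hv⟩ := this v
      exact ⟨e, by simpa using he, hv⟩
end

section
/- S10 colors S12; that is, there exists an S10-coloring of S12. -/
/-- The Sylvester graph `S₁₀`: vertex `0` is the centre `w`; vertices `1,2,3` are
`z₁,z₂,z₃`; vertices `4,5` are `x₁,y₁`; vertices `6,7` are `x₂,y₂`; vertices `8,9` are
`x₃,y₃`.  Edges `9,…,14` are the three pairs of parallel edges. -/
def S10 : Multigraph (Fin 10) (Fin 15) where
  ends := ![s(0,1), s(0,2), s(0,3), s(1,4), s(1,5), s(2,6), s(2,7), s(3,8), s(3,9),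
            s(4,5), s(4,5), s(6,7), s(6,7), s(8,9), s(8,9)]
  loopless := by decide

/-- `A₁` is the set of the six edges of `S₁₀` lying in a pair of parallel edges. -/
def A1 : Set (Fin 15) := {9, 10, 11, 12, 13, 14}

/-- The graph `S₁₂`, obtained from `S₁₀` by replacing the central vertex by a triangle:
vertices `0,1,2` form the triangle (edges `0,1,2`); vertices `3,4,5` are `z₁,z₂,z₃`,
joined to the triangle by edges `3,4,5`; vertices `6,7`, `8,9`, `10,11` are
`x₁,y₁`, `x₂,y₂`, `x₃,y₃`; edges `12,…,17` are the three pairs of parallel edges. -/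
def S12 : Multigraph (Fin 12) (Fin 18) where
  ends := ![s(0,1), s(1,2), s(0,2), s(0,3), s(1,4), s(2,5),
            s(3,6), s(3,7), s(4,8), s(4,9), s(5,10), s(5,11),
            s(6,7), s(6,7), s(8,9), s(8,9), s(10,11), s(10,11)]
  loopless := by decide

/-- `S₁₀` colors `S₁₂`: there exists an `S₁₀`-coloring of `S₁₂`. -/
theorem S10_colors_S12 : ∃ f : Fin 18 → Fin 15, S12.IsColoring S10 f := by
  refine ⟨![0,1,2,1,2,0,5,6,7,8,3,4,11,12,13,14,9,10], ?_, ?_⟩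
  · simp only [Multigraph.EdgeAdj, Multigraph.inc, Set.mem_setOf_eq]
    decide
  · intro v
    have h : ∀ v : Fin 12, ∃ u : Fin 10, ∀ e : Fin 15,
        (∃ a : Fin 18, v ∈ S12.ends a ∧
          (![0,1,2,1,2,0,5,6,7,8,3,4,11,12,13,14,9,10] : Fin 18 → Fin 15) a = e) ↔
        u ∈ S10.ends e := by decide
    obtain ⟨u, hu⟩ := h v
    exact ⟨u, Set.ext fun e => by
      simpa [Set.mem_image, Multigraph.inc] using hu e⟩
end

section
/- Let f : E(G) → E(H) be an H-coloring of G. If e is a bridge of G, then f(e) is a bridge of H. -/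
/-- `G.Reach F a b` holds if the vertices `a` and `b` are joined by a walk all of whose
edges lie in the edge set `F`. -/
def Multigraph.Reach {V E : Type} (G : Multigraph V E) (F : Set E) (a b : V) : Prop :=
  Relation.ReflTransGen (fun x y => ∃ e ∈ F, G.ends e = s(x, y)) a b

/-- An edge `e` of `G` is a bridge if its (distinct) endpoints are not joined by any
walk avoiding `e`; equivalently, removing `e` increases the number of components. -/
def Multigraph.IsBridge {V E : Type} (G : Multigraph V E) (e : E) : Prop :=
  ∀ a b : V, a ∈ G.ends e → b ∈ G.ends e → a ≠ b → ¬ G.Reach {e' | e' ≠ e} a b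

open Classical in
/-- mod-2 degree of `v` in the "fractional subgraph" `g`. -/
noncomputable def deg2 {V E : Type} [Fintype E] (G : Multigraph V E) (g : E → ZMod 2) (v : V) :
    ZMod 2 :=
  ∑ e' : E, if v ∈ G.ends e' then g e' else 0

lemma sym2_rep {V : Type} (z : Sym2 V) : ∃ x y, z = s(x, y) :=
  Sym2.ind (fun x y => ⟨x, y, rfl⟩) z

lemma z11 : (1 : ZMod 2) + 1 = 0 := rfl

lemma zmod2_cases (x : ZMod 2) : x = 0 ∨ x = 1 := by
  revert x; decide

lemma edge_ne {V E : Type} (G : Multigraph V E) {e : E} {x y : V} (h : G.ends e = s(x, y)) :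
    x ≠ y := by
  intro hxx
  exact G.loopless e (by rw [h, hxx]; exact Sym2.mk_isDiag_iff.mpr rfl)

lemma deg2_add {V E : Type} [Fintype E] (G : Multigraph V E) (g₁ g₂ : E → ZMod 2) (v : V) :
    deg2 G (fun e' => g₁ e' + g₂ e') v = deg2 G g₁ v + deg2 G g₂ v := by
  classical
  unfold deg2
  rw [← Finset.sum_add_distrib]
  apply Finset.sum_congr rfl
  intro e' _
  by_cases hm : v ∈ G.ends e' <;> simp [hm]

open Classical in
lemma deg2_single {V E : Type} [Fintype E] (G : Multigraph V E) (e₀ : E)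
    (c : ZMod 2) (v : V) :
    deg2 G (fun e' => if e' = e₀ then c else 0) v = if v ∈ G.ends e₀ then c else 0 := by
  classical
  unfold deg2
  rw [Finset.sum_eq_single e₀]
  · simp
  · intro e' _ he'
    simp [he']
  · intro h
    exact absurd (Finset.mem_univ e₀) h

open Classical in
lemma reach_deg2 {V E : Type} [Fintype E] (G : Multigraph V E) (F : Set E) (a b : V)
    (h : G.Reach F a b) :
    ∃ g : E → ZMod 2, (∀ e', g e' ≠ 0 → e' ∈ F) ∧
      ∀ v, deg2 G g v = (if v = a then 1 else 0) + (if v = b then 1 else 0) := by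
  classical
  induction h with
  | refl =>
      refine ⟨0, fun e' h => absurd rfl h, fun v => ?_⟩
      simp only [deg2, Pi.zero_apply, ite_self, Finset.sum_const_zero]
      by_cases hv : v = a <;> simp [hv, z11]
  | @tail x y hax hxy ih =>
      obtain ⟨g, hsupp, hdeg⟩ := ih
      obtain ⟨e₀, he₀F, hends⟩ := hxy
      have hxyne : x ≠ y := edge_ne G hends
      refine ⟨fun e' => g e' + (if e' = e₀ then 1 else 0), ?_, ?_⟩
      · intro e' hne
        by_cases he' : e' = e₀
        · exact he' ▸ he₀F
        · exact hsupp e' (by simpa [he'] using hne)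
      · intro v
        rw [deg2_add, deg2_single, hdeg v]
        simp only [hends, Sym2.mem_iff]
        by_cases hvx : v = x <;> by_cases hvy : v = y <;> by_cases hva : v = a <;>
          first
            | (exfalso; exact hxyne (hvx ▸ hvy ▸ rfl))
            | (simp [hvx, hvy, hva, hxyne, Ne.symm hxyne, add_assoc, z11] <;>
                simp_all [z11])

lemma deg2_reach {V E : Type} [Fintype V] [Fintype E] (G : Multigraph V E)
    (g : E → ZMod 2) (e : E) (a b : V) (hab : G.ends e = s(a, b)) (hge : g e = 1)
    (heven : ∀ v, deg2 G g v = 0) :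
    G.Reach {e' | g e' = 1 ∧ e' ≠ e} a b := by
  classical
  set F : Set E := {e' | g e' = 1 ∧ e' ≠ e} with hF
  by_contra hb
  set P : V → Prop := fun v => G.Reach F a v with hP
  have hPa : P a := Relation.ReflTransGen.refl
  have hPb : ¬ P b := hb
  have hstep : ∀ (x y : V) (e' : E), e' ∈ F → G.ends e' = s(x, y) → P x → P y := by
    intro x y e' he' hxy hx
    exact Relation.ReflTransGen.tail hx ⟨e', he', hxy⟩
  -- the double sum
  have h1 : ∑ v : V, ∑ e' : E, (if P v ∧ v ∈ G.ends e' then g e' else 0) = 0 := by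
    apply Finset.sum_eq_zero
    intro v _
    by_cases hv : P v
    · have hc : ∑ e' : E, (if P v ∧ v ∈ G.ends e' then g e' else 0)
          = ∑ e' : E, (if v ∈ G.ends e' then g e' else 0) := by
        apply Finset.sum_congr rfl
        intro e' _
        simp [hv]
      rw [hc]
      have := heven v
      unfold deg2 at this
      exact this
    · apply Finset.sum_eq_zero; intro e' _; simp [hv]
  have h2 : ∀ e' : E, ∑ v : V, (if P v ∧ v ∈ G.ends e' then g e' else 0)
      = if e' = e then 1 else 0 := by
    intro e'
    obtain ⟨x, y, hxy⟩ := sym2_rep (G.ends e')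
    have hxyne : x ≠ y := edge_ne G hxy
    have hsum : ∑ v : V, (if P v ∧ v ∈ G.ends e' then g e' else 0)
        = (if P x then g e' else 0) + (if P y then g e' else 0) := by
      have hterm : ∀ v : V, (if P v ∧ v ∈ G.ends e' then g e' else 0)
          = (if v = x then (if P x then g e' else 0) else 0)
            + (if v = y then (if P y then g e' else 0) else 0) := by
        intro v
        simp only [hxy, Sym2.mem_iff]
        by_cases hvx : v = x <;> by_cases hvy : v = y <;>
          first
            | (exfalso; exact hxyne (hvx ▸ hvy ▸ rfl))
            | simp [hvx, hvy, hxyne, Ne.symm hxyne]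
      rw [Finset.sum_congr rfl (fun v _ => hterm v), Finset.sum_add_distrib,
        Finset.sum_ite_eq' Finset.univ x, Finset.sum_ite_eq' Finset.univ y]
      simp
    rw [hsum]
    by_cases he' : e' = e
    · subst he'
      -- {x,y} = {a,b}
      have hxyab : s(x, y) = s(a, b) := by rw [← hxy, hab]
      have : (P x ∧ ¬ P y) ∨ (P y ∧ ¬ P x) := by
        rcases Sym2.eq_iff.mp hxyab with ⟨hx, hy⟩ | ⟨hx, hy⟩
        · exact Or.inl ⟨hx ▸ hPa, hy ▸ hPb⟩
        · exact Or.inr ⟨hy ▸ hPa, hx ▸ hPb⟩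
      rcases this with ⟨h1, h2⟩ | ⟨h1, h2⟩ <;> simp [h1, h2, hge]
    · rcases zmod2_cases (g e') with hg | hg
      · simp [hg, he']
      · have hmem : e' ∈ F := ⟨hg, he'⟩
        have hiff : P x ↔ P y :=
          ⟨hstep x y e' hmem hxy, hstep y x e' hmem (by rw [hxy, Sym2.eq_swap])⟩
        by_cases hx : P x
        · rw [if_pos hx, if_pos (hiff.mp hx), if_neg he', hg]
          decide
        · rw [if_neg hx, if_neg (fun h => hx (hiff.mpr h)), if_neg he']
          decide
  rw [Finset.sum_comm] at h1
  rw [Finset.sum_congr rfl (fun e' _ => h2 e'), Finset.sum_ite_eq' Finset.univ e] at h1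
  simp at h1

/-- If `f` is an `H`-coloring of `G` and `e` is a bridge of `G`, then `f(e)` is a
bridge of `H`. -/
theorem coloring_maps_bridges_to_bridges {V E V' E' : Type}
    [Fintype V] [Fintype E] [Fintype V'] [Fintype E']
    (G : Multigraph V E) (H : Multigraph V' E') (f : E → E')
    (hf : G.IsColoring H f) (e : E) (he : G.IsBridge e) :
    H.IsBridge (f e) := by
    classical
  intro a' b' ha' hb' hne hreach
  -- get an "even vector" g'' on H containing f e
  obtain ⟨g', hsupp', hdeg'⟩ := reach_deg2 H _ a' b' hreach
  have hends' : H.ends (f e) = s(a', b') := by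
    obtain ⟨x, y, hxy⟩ := sym2_rep (H.ends (f e))
    rw [hxy] at ha' hb' ⊢
    rcases Sym2.mem_iff.mp ha' with rfl | rfl <;> rcases Sym2.mem_iff.mp hb' with rfl | rfl
    · exact absurd rfl hne
    · rfl
    · exact Sym2.eq_swap
    · exact absurd rfl hne
  set g'' : E' → ZMod 2 := fun e'' => g' e'' + (if e'' = f e then 1 else 0) with hg''
  have hg''fe : g'' (f e) = 1 := by
    have : g' (f e) = 0 := by
      by_contra h
      exact (hsupp' (f e) h) rfl
    simp [hg'', this]
  have heven'' : ∀ u, deg2 H g'' u = 0 := by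
    intro u
    rw [hg'', deg2_add, deg2_single, hdeg' u]
    simp only [hends', Sym2.mem_iff]
    by_cases hua : u = a' <;> by_cases hub : u = b' <;>
      first
        | (exfalso; exact hne (hua ▸ hub ▸ rfl))
        | simp [hua, hub, hne, Ne.symm hne, add_assoc, z11]
  -- pull back to G
  set g : E → ZMod 2 := fun e₀ => g'' (f e₀) with hg
  have heven : ∀ v, deg2 G g v = 0 := by
    intro v
    obtain ⟨u, hu⟩ := hf.2 v
    rw [← heven'' u]
    unfold deg2
    rw [← Finset.sum_filter, ← Finset.sum_filter]
    apply Finset.sum_bij (i := fun e₀ _ => f e₀)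
    · intro e₀ h₀
      rw [Finset.mem_filter] at h₀ ⊢
      refine ⟨Finset.mem_univ _, ?_⟩
      have : f e₀ ∈ H.inc u := hu ▸ ⟨e₀, h₀.2, rfl⟩
      exact this
    · intro e₁ h₁ e₂ h₂ hf12
      rw [Finset.mem_filter] at h₁ h₂
      by_contra hne12
      exact hf.1 e₁ e₂ ⟨hne12, v, h₁.2, h₂.2⟩ hf12
    · intro e'' h''
      rw [Finset.mem_filter] at h''
      have : e'' ∈ H.inc u := h''.2
      rw [← hu] at this
      obtain ⟨e₀, he₀, hfe₀⟩ := this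
      exact ⟨e₀, Finset.mem_filter.mpr ⟨Finset.mem_univ _, he₀⟩, hfe₀⟩
    · intro e₀ _
      rfl
  obtain ⟨x, y, hxy⟩ := sym2_rep (G.ends e)
  have hxyne : x ≠ y := edge_ne G hxy
  have hreachG : G.Reach {e' | g e' = 1 ∧ e' ≠ e} x y :=
    deg2_reach G g e x y hxy (by rw [hg]; exact hg''fe) heven
  have : G.Reach {e' | e' ≠ e} x y :=
    Relation.ReflTransGen.mono
      (r := fun x y => ∃ e' ∈ {e' | g e' = 1 ∧ e' ≠ e}, G.ends e' = s(x, y))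
      (p := fun x y => ∃ e' ∈ {e' | e' ≠ e}, G.ends e' = s(x, y))
      (fun p q ⟨e₀, hm, hends⟩ => ⟨e₀, hm.2, hends⟩) x y hreachG
  exact he x y (hxy ▸ Sym2.mem_mk_left x y) (hxy ▸ Sym2.mem_mk_right x y) hxyne this
end

section
/- Let f : E(G) → E(S10) be an S10-coloring of a graph G. Then the subgraph of G induced by f^{-1}(A1) is a disjoint union of circuits of even length, where A1 is the set of the six edges of S10 that lie in a pair of parallel edges. -/
-- auxiliary
-- Finset involution lemma
theorem even_card_of_involution {α : Type} [DecidableEq α] (s : Finset α) :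
    ∀ (g : α → α), (∀ a ∈ s, g a ∈ s) → (∀ a ∈ s, g (g a) = a) → (∀ a ∈ s, g a ≠ a) →
    Even s.card := by
  induction s using Finset.strongInduction with
  | _ s ih =>
    intro g hmem hinv hne
    rcases Finset.eq_empty_or_nonempty s with rfl | ⟨a, ha⟩
    · simp
    · have hga : g a ∈ s := hmem a ha
      have hane : g a ≠ a := hne a ha
      have hpair : ({a, g a} : Finset α) ⊆ s := by
        intro x hx
        rcases Finset.mem_insert.1 hx with rfl | hx
        · exact ha
        · rcases Finset.mem_singleton.1 hx with rfl; exact hga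
      have hss : s \ {a, g a} ⊂ s :=
        Finset.sdiff_ssubset hpair ⟨a, Finset.mem_insert_self _ _⟩
      have hmem' : ∀ x ∈ s \ {a, g a}, g x ∈ s \ {a, g a} := by
        intro x hx
        obtain ⟨hxs, hxn⟩ := Finset.mem_sdiff.1 hx
        simp only [Finset.mem_insert, Finset.mem_singleton, not_or] at hxn
        refine Finset.mem_sdiff.2 ⟨hmem x hxs, ?_⟩
        simp only [Finset.mem_insert, Finset.mem_singleton, not_or]
        constructor
        · intro h; exact hxn.2 (by rw [← hinv x hxs, h])
        · intro h
          have : g (g x) = g (g a) := by rw [h]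
          rw [hinv x hxs, hinv a ha] at this
          exact hxn.1 this
      have hinv' : ∀ x ∈ s \ {a, g a}, g (g x) = x := fun x hx =>
        hinv x (Finset.mem_sdiff.1 hx).1
      have hne' : ∀ x ∈ s \ {a, g a}, g x ≠ x := fun x hx =>
        hne x (Finset.mem_sdiff.1 hx).1
      have heven := ih _ hss g hmem' hinv' hne'
      have hcard : s.card = (s \ {a, g a}).card + 2 := by
        rw [Finset.card_sdiff_of_subset hpair, Finset.card_pair (Ne.symm hane)]
        have := Finset.card_le_card hpair
        rw [Finset.card_pair (Ne.symm hane)] at this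
        omega
      rw [hcard]
      exact heven.add even_two

theorem even_ncard_of_involution {α : Type} [Fintype α] (s : Set α) (g : α → α)
    (hmem : ∀ a ∈ s, g a ∈ s) (hinv : ∀ a ∈ s, g (g a) = a) (hne : ∀ a ∈ s, g a ≠ a) :
    Even s.ncard := by
  classical
  have hfin : s.Finite := Set.toFinite s
  rw [Set.ncard_eq_toFinset_card s hfin]
  exact even_card_of_involution _ g
    (fun a ha => hfin.mem_toFinset.2 (hmem a (hfin.mem_toFinset.1 ha)))
    (fun a ha => hinv a (hfin.mem_toFinset.1 ha))
    (fun a ha => hne a (hfin.mem_toFinset.1 ha))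

def InA1 (x : Fin 15) : Prop := x = 9 ∨ x = 10 ∨ x = 11 ∨ x = 12 ∨ x = 13 ∨ x = 14

lemma mem_A1_iff (x : Fin 15) : x ∈ A1 ↔ InA1 x := Iff.rfl

instance : DecidablePred InA1 := fun x => by unfold InA1; infer_instance

lemma S10_combinatorics : ∀ (u : Fin 10) (x : Fin 15), InA1 x → u ∈ S10.ends x →
    ∃ c : Fin 15, (c = 9 ∨ c = 11 ∨ c = 13) ∧ u ∈ S10.ends c ∧ u ∈ S10.ends (c+1) ∧
      InA1 c ∧ InA1 (c+1) ∧ c ≠ c + 1 ∧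
      ∀ y : Fin 15, InA1 y → u ∈ S10.ends y → (y = c ∨ y = c + 1) := by decide

lemma pair_eq : ∀ c c' x : Fin 15, (c = 9 ∨ c = 11 ∨ c = 13) → (c' = 9 ∨ c' = 11 ∨ c' = 13) →
    (x = c ∨ x = c+1) → (x = c' ∨ x = c'+1) → c = c' := by decide

section Main
variable {V E : Type} (G : Multigraph V E) (f : E → Fin 15)

/-- local structure at a vertex -/
def BaseProp (v : V) (c : Fin 15) : Prop :=
  ∃ e₁ e₂ : E, e₁ ∈ G.inc v ∧ e₂ ∈ G.inc v ∧ e₁ ≠ e₂ ∧ f e₁ = c ∧ f e₂ = c + 1 ∧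
    (f ⁻¹' A1) ∩ G.inc v = {e₁, e₂}


lemma inj_on (hf : G.IsColoring S10 f) (v : V) : Set.InjOn f (G.inc v) := by
  intro e he e' he' hfe
  by_contra hne
  exact hf.1 e e' ⟨hne, v, he, he'⟩ hfe

lemma key (hf : G.IsColoring S10 f) (v : V) (h : ((f ⁻¹' A1) ∩ G.inc v).Nonempty) :
    ∃ c : Fin 15, (c = 9 ∨ c = 11 ∨ c = 13) ∧ BaseProp G f v c := by
  obtain ⟨e0, he0A, he0v⟩ := h
  obtain ⟨u, hu⟩ := hf.2 v
  have hfe0u : u ∈ S10.ends (f e0) := by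
    have : f e0 ∈ S10.inc u := by rw [← hu]; exact ⟨e0, he0v, rfl⟩
    exact this
  obtain ⟨c, hcor, hc1, hc2, hcA, hc1A, hcne, huniv⟩ :=
    S10_combinatorics u (f e0) ((mem_A1_iff _).1 he0A) hfe0u
  have hc1' : c ∈ f '' G.inc v := by rw [hu]; exact hc1
  have hc2' : c + 1 ∈ f '' G.inc v := by rw [hu]; exact hc2
  obtain ⟨e₁, he₁v, hfe₁⟩ := hc1'
  obtain ⟨e₂, he₂v, hfe₂⟩ := hc2'
  refine ⟨c, hcor, e₁, e₂, he₁v, he₂v, ?_, hfe₁, hfe₂, ?_⟩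
  · intro h; rw [h, hfe₂] at hfe₁; exact hcne hfe₁.symm
  · ext e
    simp only [Set.mem_inter_iff, Set.mem_preimage, Set.mem_insert_iff, Set.mem_singleton_iff]
    constructor
    · rintro ⟨heA, hev⟩
      have hy : u ∈ S10.ends (f e) := by
        have : f e ∈ S10.inc u := by rw [← hu]; exact ⟨e, hev, rfl⟩
        exact this
      rcases huniv (f e) ((mem_A1_iff _).1 heA) hy with h1 | h1
      · exact Or.inl (inj_on G f hf v hev he₁v (h1.trans hfe₁.symm))
      · exact Or.inr (inj_on G f hf v hev he₂v (h1.trans hfe₂.symm))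
    · rintro (rfl | rfl)
      · exact ⟨(mem_A1_iff _).2 (hfe₁ ▸ hcA), he₁v⟩
      · exact ⟨(mem_A1_iff _).2 (hfe₂ ▸ hc1A), he₂v⟩

end Main

section Main2
variable {V E : Type} (G : Multigraph V E) (f : E → Fin 15)

lemma step_const (hf : G.IsColoring S10 f) {x y : V} {c : Fin 15}
    (hcor : c = 9 ∨ c = 11 ∨ c = 13) (hx : BaseProp G f x c)
    (hstep : ∃ e ∈ f ⁻¹' A1, G.ends e = s(x, y)) : BaseProp G f y c := by
  obtain ⟨e, heA, hends⟩ := hstep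
  have hex : e ∈ G.inc x := by show x ∈ G.ends e; rw [hends]; exact Sym2.mem_mk_left x y
  have hey : e ∈ G.inc y := by show y ∈ G.ends e; rw [hends]; exact Sym2.mem_mk_right x y
  obtain ⟨c', hcor', hy⟩ := key G f hf y ⟨e, heA, hey⟩
  obtain ⟨e₁, e₂, _, _, _, hf1, hf2, hset⟩ := hx
  have h1 : e ∈ ({e₁, e₂} : Set E) := hset ▸ (⟨heA, hex⟩ : e ∈ (f ⁻¹' A1) ∩ G.inc x)
  have hfe : f e = c ∨ f e = c + 1 := by
    rcases h1 with rfl | h1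
    · exact Or.inl hf1
    · rcases h1 with rfl; exact Or.inr hf2
  obtain ⟨e₁', e₂', he₁'y, he₂'y, hne', hf1', hf2', hset'⟩ := hy
  have h2 : e ∈ ({e₁', e₂'} : Set E) := hset' ▸ (⟨heA, hey⟩ : e ∈ (f ⁻¹' A1) ∩ G.inc y)
  have hfe' : f e = c' ∨ f e = c' + 1 := by
    rcases h2 with rfl | h2
    · exact Or.inl hf1'
    · rcases h2 with rfl; exact Or.inr hf2'
  have hcc : c = c' := pair_eq c c' (f e) hcor hcor' hfe hfe'
  rw [hcc]
  exact ⟨e₁', e₂', he₁'y, he₂'y, hne', hf1', hf2', hset'⟩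

lemma comp_const (hf : G.IsColoring S10 f) {v w : V} (h : G.Reach (f ⁻¹' A1) v w)
    {c : Fin 15} (hcor : c = 9 ∨ c = 11 ∨ c = 13) (hv : BaseProp G f v c) :
    BaseProp G f w c := by
  induction h with
  | refl => exact hv
  | tail h1 h2 ih => exact step_const G f hf hcor ih h2

open Classical in
noncomputable def gfun (c : Fin 15) : V → V := fun w =>
  if hw : ∃ e, e ∈ G.inc w ∧ f e = c then
    Sym2.Mem.other (show w ∈ G.ends hw.choose from hw.choose_spec.1)
  else w

lemma gfun_spec (c : Fin 15) {w : V} (hw : ∃ e, e ∈ G.inc w ∧ f e = c) :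
    ∃ e, e ∈ G.inc w ∧ f e = c ∧ G.ends e = s(w, gfun G f c w) ∧ gfun G f c w ≠ w := by
  refine ⟨hw.choose, hw.choose_spec.1, hw.choose_spec.2, ?_, ?_⟩
  · show G.ends hw.choose = _
    unfold gfun
    rw [dif_pos hw]
    exact (Sym2.other_spec _).symm
  · unfold gfun
    rw [dif_pos hw]
    exact Sym2.other_ne (G.loopless _) _

lemma gfun_invol (hf : G.IsColoring S10 f) (c : Fin 15) {w : V}
    (hw : ∃ e, e ∈ G.inc w ∧ f e = c) : gfun G f c (gfun G f c w) = w := by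
  obtain ⟨e, hew, hfe, hends, hne⟩ := gfun_spec G f c hw
  set y := gfun G f c w with hy
  have heyy : e ∈ G.inc y := by show y ∈ G.ends e; rw [hends]; exact Sym2.mem_mk_right _ _
  have hy' : ∃ e', e' ∈ G.inc y ∧ f e' = c := ⟨e, heyy, hfe⟩
  obtain ⟨e', he'y, hfe', hends', hne''⟩ := gfun_spec G f c hy'
  have hee : e' = e := inj_on G f hf y he'y heyy (hfe'.trans hfe.symm)
  rw [hee, hends] at hends'
  rcases Sym2.eq_iff.1 hends' with ⟨h1, h2⟩ | ⟨h1, h2⟩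
  · exact absurd h1.symm hne
  · exact h1.symm

end Main2


/-- If `f` is an `S₁₀`-coloring of a graph `G`, then the subgraph of `G` induced by
`f⁻¹(A₁)` is a disjoint union of circuits of even length: every vertex incident with an
edge of `f⁻¹(A₁)` is incident with exactly two of them (so the induced subgraph is a
disjoint union of circuits), and the connected component of each such vertex within
`f⁻¹(A₁)` has an even number of vertices. -/
theorem preimage_A1_is_disjoint_union_of_even_circuits {V E : Type}
    [Fintype V] [Fintype E]
    (G : Multigraph V E) (f : E → Fin 15) (hf : G.IsColoring S10 f) :
    (∀ v : V, ((f ⁻¹' A1) ∩ G.inc v).Nonempty → ((f ⁻¹' A1) ∩ G.inc v).ncard = 2) ∧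
    (∀ v : V, ((f ⁻¹' A1) ∩ G.inc v).Nonempty →
      Even {w : V | G.Reach (f ⁻¹' A1) v w}.ncard) := by
  constructor
  · intro v h
    obtain ⟨c, hcor, e₁, e₂, _, _, hne, _, _, hset⟩ := key G f hf v h
    rw [hset]
    exact Set.ncard_pair hne
  · intro v h
    obtain ⟨c, hcor, hv⟩ := key G f hf v h
    have hcA1 : c ∈ A1 := by
      rcases hcor with rfl | rfl | rfl <;> exact (mem_A1_iff _).2 (by decide)
    set S : Set V := {w : V | G.Reach (f ⁻¹' A1) v w} with hS
    have hbase : ∀ w ∈ S, BaseProp G f w c := fun w hw => comp_const G f hf hw hcor hv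
    have hex : ∀ w ∈ S, ∃ e, e ∈ G.inc w ∧ f e = c := by
      intro w hw
      obtain ⟨e₁, e₂, he₁, _, _, hf1, _, _⟩ := hbase w hw
      exact ⟨e₁, he₁, hf1⟩
    apply even_ncard_of_involution S (gfun G f c)
    · intro a ha
      obtain ⟨e, hea, hfe, hends, _⟩ := gfun_spec G f c (hex a ha)
      exact Relation.ReflTransGen.tail ha ⟨e, by rw [Set.mem_preimage, hfe]; exact hcA1, hends⟩
    · intro a ha
      exact gfun_invol G f hf c (hex a ha)
    · intro a ha
      obtain ⟨_, _, _, _, hne⟩ := gfun_spec G f c (hex a ha)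
      exact hne
end
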